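/- Let H be a complex separable Hilbert space and A a bounded self-adjoint operator on H. Then there exists a positive trace-class operator V on H such that the closed linear span of the set {(A−λ)⁻¹ V x : x ∈ H, λ ∈ ℂ, Im λ ≠ 0} equals H. -/

import Mathlib

open MeasureTheory Complex Filter Topology Set ComplexConjugate

noncomputable section

variable {H : Type*} [NormedAddCommGroup H] [InnerProductSpace ℂ H] [CompleteSpace H]

/-- `V` is a positive trace-class operator: for some Hilbert basis `(e n)` and a summable
sequence `(l n)` of nonnegative reals, `V x = Σ l n ⟨x, e n⟩ e n`. -/
def IsPositiveTraceClass (V : H →L[ℂ] H) : Prop :=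
  ∃ (ι : Type) (e : ι → H) (l : ι → ℝ),
    Orthonormal ℂ e ∧
    (Submodule.span ℂ (Set.range e)).topologicalClosure = ⊤ ∧
    Summable l ∧ (∀ n : ι, 0 ≤ l n) ∧
    ∀ x : H, V x = ∑' n : ι, ((l n : ℂ) * (inner ℂ (e n) x : ℂ)) • e n

/-- The closed linear span of `{(A−λ)⁻¹ V x : x ∈ H, Im λ ≠ 0}` is all of `H`. -/
def ResolventMaximal (A V : H →L[ℂ] H) : Prop :=
  (Submodule.span ℂ {y : H | ∃ (x : H) (lam : ℂ), lam.im ≠ 0 ∧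
      y = Ring.inverse (A - lam • (1 : H →L[ℂ] H)) (V x)}).topologicalClosure = ⊤

/-- For every bounded self-adjoint operator `A` on a complex separable
Hilbert space there is a positive trace-class operator `V` such that the closed linear span
of `{(A−λ)⁻¹ V x : x ∈ H, Im λ ≠ 0}` is all of `H`. -/
theorem exists_positive_traceClass_resolventMaximal
    {H : Type*} [NormedAddCommGroup H] [InnerProductSpace ℂ H] [CompleteSpace H]
    [TopologicalSpace.SeparableSpace H]
    (A : H →L[ℂ] H) (hA : IsSelfAdjoint A) :
    ∃ V : H →L[ℂ] H, IsPositiveTraceClass V ∧ ResolventMaximal A V := by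
  classical
  -- get a Hilbert basis
  obtain ⟨w, b, hb⟩ := exists_hilbertBasis ℂ H
  have hbon : Orthonormal ℂ (fun i : w => (i : H)) := by
    have := b.orthonormal; rwa [hb] at this
  -- the orthonormal set `w` is countable
  have hwc : Countable w := by
    apply Pairwise.countable_of_isOpen_disjoint
      (s := fun i : w => Metric.ball (i : H) (1/2))
    · intro i j hij
      apply Metric.ball_disjoint_ball
      have h2 : ‖(i : H) - (j : H)‖ ^ 2 = 2 := by
        rw [@norm_sub_sq ℂ]
        have h0 : (inner ℂ (i : H) (j : H) : ℂ) = 0 := hbon.2 hij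
        rw [h0]
        rw [hbon.1 i, hbon.1 j]; norm_num
      have hge : (1 : ℝ) ≤ ‖(i : H) - (j : H)‖ := by nlinarith [norm_nonneg ((i : H) - (j : H))]
      calc (1/2 : ℝ) + 1/2 = 1 := by norm_num
        _ ≤ ‖(i : H) - (j : H)‖ := hge
        _ = dist (i : H) (j : H) := (dist_eq_norm _ _).symm
    · intro i; exact Metric.isOpen_ball
    · intro i; exact Metric.nonempty_ball.2 (by norm_num)
  obtain ⟨f, hf⟩ := exists_injective_nat w
  set ι : Type := ↥(Set.range f) with hι
  let eqv : w ≃ ι := Equiv.ofInjective f hf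
  let e : ι → H := fun n => ((eqv.symm n : w) : H)
  let l : ι → ℝ := fun n => (1/2 : ℝ) ^ (n : ℕ)
  have hlpos : ∀ n, 0 < l n := fun n => pow_pos (by norm_num) _
  have he : Orthonormal ℂ e := hbon.comp _ eqv.symm.injective
  have hrange : Set.range e = w := by
    have : Set.range e = Set.range (fun i : w => (i : H)) :=
      eqv.symm.surjective.range_comp _
    rw [this, Subtype.range_coe]
  have hdense : (Submodule.span ℂ (Set.range e)).topologicalClosure = ⊤ := by
    rw [hrange]
    have := b.dense_span
    rwa [hb, Subtype.range_coe] at this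
  have hl : Summable l := by
    have : Summable (fun n : ℕ => (1/2 : ℝ) ^ n) := summable_geometric_two
    exact this.comp_injective Subtype.val_injective
  -- construct V
  let K : ι → (H →L[ℂ] H) := fun n =>
    (l n) • ((ContinuousLinearMap.toSpanSingleton ℂ (e n)).comp (innerSL ℂ (e n)))
  have hKnorm : ∀ n, ‖K n‖ ≤ l n := by
    intro n
    have h1 : ‖(ContinuousLinearMap.toSpanSingleton ℂ (e n)).comp (innerSL ℂ (e n))‖ ≤ 1 := by
      calc ‖(ContinuousLinearMap.toSpanSingleton ℂ (e n)).comp (innerSL ℂ (e n))‖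
          ≤ ‖ContinuousLinearMap.toSpanSingleton ℂ (e n)‖ * ‖innerSL ℂ (e n)‖ :=
            ContinuousLinearMap.opNorm_comp_le _ _
        _ ≤ ‖e n‖ * ‖e n‖ := by
            rw [ContinuousLinearMap.norm_toSpanSingleton]
            gcongr
            exact innerSL_apply_norm (𝕜 := ℂ) (x := e n) ▸ le_rfl
        _ = 1 := by rw [he.1 n]; norm_num
    calc ‖K n‖ = |l n| * ‖(ContinuousLinearMap.toSpanSingleton ℂ (e n)).comp (innerSL ℂ (e n))‖ :=
          norm_smul _ _
      _ ≤ l n * 1 := by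
          rw [_root_.abs_of_nonneg (hlpos n).le]
          exact mul_le_mul_of_nonneg_left h1 (hlpos n).le
      _ = l n := mul_one _
  have hK : Summable K := Summable.of_norm_bounded hl hKnorm
  set V : H →L[ℂ] H := ∑' n, K n with hV
  have hVapply : ∀ x : H, V x = ∑' n, K n x := by
    intro x
    have := (ContinuousLinearMap.apply ℂ H x).map_tsum hK
    simpa using this
  have hKapp : ∀ n x, K n x = ((l n : ℂ) * (inner ℂ (e n) x : ℂ)) • e n := by
    intro n x
    show (l n) • ((inner ℂ (e n) x : ℂ) • e n) = _
    rw [RCLike.real_smul_eq_coe_smul (K := ℂ), smul_smul]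
    norm_cast
  have hVform : ∀ x : H, V x = ∑' n, ((l n : ℂ) * (inner ℂ (e n) x : ℂ)) • e n := by
    intro x
    rw [hVapply x]
    exact tsum_congr fun n => hKapp n x
  refine ⟨V, ⟨ι, e, l, he, hdense, hl, fun n => (hlpos n).le, hVform⟩, ?_⟩
  -- Resolvent maximality
  have hVe : ∀ n, V (e n) = (l n : ℂ) • e n := by
    intro n
    rw [hVform]
    rw [tsum_eq_single n]
    · have : (inner ℂ (e n) (e n) : ℂ) = 1 := by
        rw [@inner_self_eq_norm_sq_to_K ℂ, he.1 n]; norm_num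
      rw [this, mul_one]
    · intro m hmn
      rw [he.2 hmn, mul_zero, zero_smul]
  -- the resolvent at I is a unit
  have hI : (Complex.I) ∉ spectrum ℂ A := by
    intro h
    have := hA.mem_spectrum_eq_re h
    simp at this
  rw [spectrum.notMem_iff] at hI
  have hu : IsUnit (A - Complex.I • (1 : H →L[ℂ] H)) := by
    have : A - Complex.I • (1 : H →L[ℂ] H) = -(algebraMap ℂ (H →L[ℂ] H) Complex.I - A) := by
      rw [Algebra.algebraMap_eq_smul_one, neg_sub]
    rw [this]
    exact hI.neg
  let Eq : H ≃L[ℂ] H := ContinuousLinearEquiv.unitsEquiv ℂ H hu.unit⁻¹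
  have hRinv : ∀ z : H, Ring.inverse (A - Complex.I • (1 : H →L[ℂ] H)) z = Eq z := by
    intro z
    rw [← hu.unit_spec, Ring.inverse_unit]
    rfl
  set S : Set H := {y : H | ∃ (x : H) (lam : ℂ), lam.im ≠ 0 ∧
      y = Ring.inverse (A - lam • (1 : H →L[ℂ] H)) (V x)} with hS
  have hsub : ⇑Eq '' Set.range e ⊆ ↑(Submodule.span ℂ S) := by
    rintro y ⟨v, ⟨n, rfl⟩, rfl⟩
    have hmem : Eq (V (e n)) ∈ S := by
      refine ⟨e n, Complex.I, by simp, ?_⟩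
      rw [hRinv]
    have h1 : Eq (V (e n)) ∈ Submodule.span ℂ S := Submodule.subset_span hmem
    have h2 : Eq (e n) = ((l n : ℂ)⁻¹) • Eq (V (e n)) := by
      have hc : ((l n : ℂ)) ≠ 0 := by exact_mod_cast (hlpos n).ne'
      rw [hVe n, _root_.map_smul, smul_smul, inv_mul_cancel₀ hc, one_smul]
    rw [h2]
    exact Submodule.smul_mem _ _ h1
  rw [ResolventMaximal, ← hS, ← Submodule.dense_iff_topologicalClosure_eq_top]
  have hde : Dense (↑(Submodule.span ℂ (Set.range e)) : Set H) :=
    Submodule.dense_iff_topologicalClosure_eq_top.mpr hdense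
  have hdi : Dense (⇑Eq '' ↑(Submodule.span ℂ (Set.range e))) := by
    rw [dense_iff_closure_eq, ← Eq.image_closure, hde.closure_eq, Set.image_univ]
    exact Eq.surjective.range_eq
  refine hdi.mono ?_
  rw [← ContinuousLinearEquiv.coe_coe Eq, ← ContinuousLinearMap.coe_coe (Eq : H →L[ℂ] H), ← Submodule.map_coe, Submodule.map_span]
  refine SetLike.coe_subset_coe.mpr (Submodule.span_le.mpr ?_)
  rw [ContinuousLinearMap.coe_coe, ContinuousLinearEquiv.coe_coe]
  exact hsub
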